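/- Compositionality of uioco: let s and e be composable labelled transition systems, and let i_s and i_e be input-enabled transition systems with I_{i_s} = I_s, U_{i_s} = U_s, I_{i_e} = I_e and U_{i_e} = U_e. If s and e are mutually accepting, i_s uioco s, and i_e uioco e, then i_s ‖ i_e uioco s ‖ e. -/

import Mathlib

/-- Visible labels extended with the quiescence label `δ`. -/
inductive DLabel (A : Type) where
  | act : A → DLabel A
  | δ : DLabel A
deriving DecidableEq

/-- A labelled transition system with state type `S` and label type `A`.
`T p none p'` is an internal (τ) transition; `T p (some a) p'` a visible one.
The set of states is the whole type `S`; the initial state is `q0`. -/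
structure LTS (S : Type) (A : Type) where
  T : S → Option A → S → Prop
  I : Set A
  U : Set A
  q0 : S

namespace LTS

variable {S E F A : Type}

/-- The set of visible labels. -/
def L (s : LTS S A) : Set A := s.I ∪ s.U

/-- Well-formedness of an LTS: countably many states and labels, inputs and
outputs disjoint, and visible transitions labelled in `I ∪ U`. -/
def WF (s : LTS S A) : Prop :=
  Countable S ∧ s.I.Countable ∧ s.U.Countable ∧ Disjoint s.I s.U ∧
    ∀ p a q, s.T p (some a) q → a ∈ s.L

/-- A state is quiescent if it has no output transitions and no τ-transitions. -/
def quiescent (s : LTS S A) (p : S) : Prop :=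
  (∀ x ∈ s.U, ∀ p', ¬ s.T p (some x) p') ∧ (∀ p', ¬ s.T p none p')

/-- Single-step transition relation for δ-extended labels: `δ` is a self-loop
on quiescent states. -/
def dstep (s : LTS S A) (p : S) : DLabel A → S → Prop
  | .act a, p' => s.T p (some a) p'
  | .δ, p' => p = p' ∧ s.quiescent p

/-- `eps p p'`: `p'` is reachable from `p` by finitely many τ-transitions. -/
def eps (s : LTS S A) : S → S → Prop :=
  Relation.ReflTransGen (fun p q => s.T p none q)

/-- Weak transition relation `p ⟹σ p'` over δ-extended traces. -/
def wtrans (s : LTS S A) : S → List (DLabel A) → S → Prop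
  | p, [], p' => s.eps p p'
  | p, ℓ :: σ, p'' => ∃ p1 p2, s.eps p p1 ∧ s.dstep p1 ℓ p2 ∧ s.wtrans p2 σ p''

/-- The δ-extended label set `L^δ` as a set of `DLabel`s. -/
def Ld (s : LTS S A) : Set (DLabel A) := (DLabel.act '' s.L) ∪ {DLabel.δ}

/-- `Utraces s`: δ-extended traces of `s` (from the initial state) that never
pass through a state refusing a subsequent input of the trace. -/
def Utraces (s : LTS S A) : Set (List (DLabel A)) :=
  { σ | (∀ ℓ ∈ σ, ℓ ∈ s.Ld) ∧ (∃ p, s.wtrans s.q0 σ p) ∧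
      ∀ σ1 a σ2, σ = σ1 ++ DLabel.act a :: σ2 → a ∈ s.I →
        ∀ p, s.wtrans s.q0 σ1 p → ∃ p', s.wtrans p [DLabel.act a] p' }

/-- `out p`: the outputs (including quiescence δ) enabled in state `p`. -/
def out (s : LTS S A) (p : S) : Set (DLabel A) :=
  { x | match x with
        | .act a => a ∈ s.U ∧ ∃ p', s.T p (some a) p'
        | .δ => s.quiescent p }

/-- `out` of a set of states. -/
def outSet (s : LTS S A) (P : Set S) : Set (DLabel A) := ⋃ p ∈ P, s.out p

/-- `inp p`: the inputs weakly enabled in state `p`. -/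
def inp (s : LTS S A) (p : S) : Set A :=
  { a | a ∈ s.I ∧ ∃ p', s.wtrans p [DLabel.act a] p' }

/-- The states reached from the initial state after trace `σ`. -/
def after (s : LTS S A) (σ : List (DLabel A)) : Set S :=
  { p' | s.wtrans s.q0 σ p' }

/-- Input-enabledness: every input is weakly enabled in every state. -/
def IOTS (s : LTS S A) : Prop :=
  ∀ q : S, ∀ a ∈ s.I, ∃ q', s.wtrans q [DLabel.act a] q'

/-- Two LTSs are composable iff their output sets are disjoint. -/
def Composable (s : LTS S A) (e : LTS E A) : Prop := Disjoint s.U e.U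

/-- Parallel composition of two LTSs: synchronisation on shared labels,
interleaving on non-shared labels and τ. -/
def par (s : LTS S A) (e : LTS E A) : LTS (S × E) A where
  I := (s.I \ e.U) ∪ (e.I \ s.U)
  U := s.U ∪ e.U
  q0 := (s.q0, e.q0)
  T := fun x ℓ y =>
    (s.T x.1 ℓ y.1 ∧ y.2 = x.2 ∧ (ℓ = none ∨ ∃ a ∈ s.L, ℓ = some a) ∧
      ∀ a ∈ e.L, ℓ ≠ some a) ∨
    (e.T x.2 ℓ y.2 ∧ y.1 = x.1 ∧ (ℓ = none ∨ ∃ a ∈ e.L, ℓ = some a) ∧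
      ∀ a ∈ s.L, ℓ ≠ some a) ∨
    (∃ a ∈ s.L ∩ e.L, ℓ = some a ∧ s.T x.1 (some a) y.1 ∧ e.T x.2 (some a) y.2)

/-- The uioco implementation relation. -/
def uioco (i : LTS E A) (s : LTS S A) : Prop :=
  ∀ σ ∈ s.Utraces, i.outSet (i.after σ) ⊆ s.outSet (s.after σ)

/-- `s.Accepts e`: along every Utrace of `s ‖ e`, every output of `e` that is an
input label of `s` is actually accepted by `s` and is an output of `e`. -/
def Accepts (s : LTS S A) (e : LTS E A) : Prop :=
  ∀ σ ∈ (s.par e).Utraces, ∀ p q, (s.par e).wtrans (s.par e).q0 σ (p, q) →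
    ∀ a, DLabel.act a ∈ e.out q → a ∈ s.I → a ∈ s.inp p ∧ a ∈ e.U

/-- Mutual acceptance. -/
def MutuallyAccepts (s : LTS S A) (e : LTS E A) : Prop := s.Accepts e ∧ e.Accepts s

/-- Isomorphism of LTSs: equal label sets and a bijection on states preserving
the initial state and all transitions (including τ and δ). -/
def Isomorphic (s : LTS S A) (s' : LTS E A) : Prop :=
  s.I = s'.I ∧ s.U = s'.U ∧ ∃ f : S ≃ E, f s.q0 = s'.q0 ∧
    (∀ p p' ℓ, s.T p ℓ p' ↔ s'.T (f p) ℓ (f p')) ∧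
    (∀ p p', s.dstep p DLabel.δ p' ↔ s'.dstep (f p) DLabel.δ (f p'))

open Classical in
/-- Projection of a trace onto a set of labels. -/
noncomputable def proj : List (DLabel A) → Set (DLabel A) → List (DLabel A)
  | [], _ => []
  | ℓ :: σ, 𝓛 => if ℓ ∈ 𝓛 then ℓ :: proj σ 𝓛 else proj σ 𝓛

end LTS


namespace LTS

section Aux
variable {S E SI EI A : Type}

lemma eps_trans' {s : LTS S A} {p q r : S} (h1 : s.eps p q) (h2 : s.eps q r) : s.eps p r :=
  Relation.ReflTransGen.trans h1 h2

lemma wtrans_eps_left {s : LTS S A} {σ : List (DLabel A)} {p p1 p' : S}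
    (h : s.eps p p1) (hw : s.wtrans p1 σ p') : s.wtrans p σ p' := by
  cases σ with
  | nil => exact eps_trans' h hw
  | cons ℓ σ =>
    obtain ⟨a, b, h1, h2, h3⟩ := hw
    exact ⟨a, b, eps_trans' h h1, h2, h3⟩

lemma wtrans_eps_right {s : LTS S A} {σ : List (DLabel A)} :
    ∀ {p p1 p' : S}, s.wtrans p σ p1 → s.eps p1 p' → s.wtrans p σ p' := by
  induction σ with
  | nil => intro p p1 p' h h2; exact eps_trans' h h2
  | cons ℓ σ ih =>
    intro p p1 p' h h2
    obtain ⟨a, b, h1, hs, h3⟩ := h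
    exact ⟨a, b, h1, hs, ih h3 h2⟩

lemma wtrans_append {s : LTS S A} {σ1 σ2 : List (DLabel A)} :
    ∀ {p m p' : S}, s.wtrans p σ1 m → s.wtrans m σ2 p' → s.wtrans p (σ1 ++ σ2) p' := by
  induction σ1 with
  | nil => intro p m p' h1 h2; exact wtrans_eps_left h1 h2
  | cons ℓ σ ih =>
    intro p m p' h1 h2
    obtain ⟨a, b, h1, hs, h3⟩ := h1
    exact ⟨a, b, h1, hs, ih h3 h2⟩

lemma wtrans_append_decomp {s : LTS S A} {σ1 σ2 : List (DLabel A)} :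
    ∀ {p p' : S}, s.wtrans p (σ1 ++ σ2) p' → ∃ m, s.wtrans p σ1 m ∧ s.wtrans m σ2 p' := by
  induction σ1 with
  | nil => intro p p' h; exact ⟨p, Relation.ReflTransGen.refl, h⟩
  | cons ℓ σ ih =>
    intro p p' h
    obtain ⟨a, b, h1, hs, h3⟩ := h
    obtain ⟨m, hm1, hm2⟩ := ih h3
    exact ⟨m, ⟨a, b, h1, hs, hm1⟩, hm2⟩

lemma proj_cons_mem {ℓ : DLabel A} {𝓛 : Set (DLabel A)} (σ : List (DLabel A)) (h : ℓ ∈ 𝓛) :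
    proj (ℓ :: σ) 𝓛 = ℓ :: proj σ 𝓛 := by
  rw [proj, if_pos h]

lemma proj_cons_not_mem {ℓ : DLabel A} {𝓛 : Set (DLabel A)} (σ : List (DLabel A)) (h : ℓ ∉ 𝓛) :
    proj (ℓ :: σ) 𝓛 = proj σ 𝓛 := by
  rw [proj, if_neg h]

lemma mem_of_mem_proj {ℓ : DLabel A} {𝓛 : Set (DLabel A)} :
    ∀ {σ : List (DLabel A)}, ℓ ∈ proj σ 𝓛 → ℓ ∈ σ ∧ ℓ ∈ 𝓛 := by
  intro σ
  induction σ with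
  | nil => intro h; rw [proj] at h; cases h
  | cons k σ ih =>
    intro h
    by_cases hk : k ∈ 𝓛
    · rw [proj_cons_mem σ hk] at h
      rcases List.mem_cons.mp h with h | h
      · subst h; exact ⟨List.mem_cons_self, hk⟩
      · obtain ⟨h1, h2⟩ := ih h; exact ⟨List.mem_cons_of_mem _ h1, h2⟩
    · rw [proj_cons_not_mem σ hk] at h
      obtain ⟨h1, h2⟩ := ih h
      exact ⟨List.mem_cons_of_mem _ h1, h2⟩

lemma proj_decomp {𝓛 : Set (DLabel A)} {ℓ : DLabel A} :
    ∀ {σ σ1 σ2 : List (DLabel A)}, proj σ 𝓛 = σ1 ++ ℓ :: σ2 →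
      ∃ τ1 τ2, σ = τ1 ++ ℓ :: τ2 ∧ proj τ1 𝓛 = σ1 ∧ proj τ2 𝓛 = σ2 := by
  intro σ
  induction σ with
  | nil =>
    intro σ1 σ2 h; rw [proj] at h
    exact absurd h.symm (by simp)
  | cons k σ ih =>
    intro σ1 σ2 h
    by_cases hk : k ∈ 𝓛
    · rw [proj_cons_mem σ hk] at h
      cases σ1 with
      | nil =>
        simp only [List.nil_append, List.cons.injEq] at h
        exact ⟨[], σ, by rw [h.1]; rfl, by rw [proj], h.2⟩
      | cons m σ1' =>
        simp only [List.cons_append, List.cons.injEq] at h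
        obtain ⟨τ1, τ2, h1, h2, h3⟩ := ih h.2
        exact ⟨k :: τ1, τ2, by rw [h1]; rfl, by rw [proj_cons_mem τ1 hk, h2, h.1], h3⟩
    · rw [proj_cons_not_mem σ hk] at h
      obtain ⟨τ1, τ2, h1, h2, h3⟩ := ih h
      exact ⟨k :: τ1, τ2, by rw [h1]; rfl, by rw [proj_cons_not_mem τ1 hk, h2], h3⟩

lemma act_mem_Ld {s : LTS S A} {a : A} : DLabel.act a ∈ s.Ld ↔ a ∈ s.L := by
  simp [LTS.Ld]

lemma delta_mem_Ld {s : LTS S A} : DLabel.δ ∈ s.Ld := Or.inr rfl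

lemma L_eq {s : LTS S A} {t : LTS E A} (hI : s.I = t.I) (hU : s.U = t.U) : s.L = t.L := by
  unfold LTS.L; rw [hI, hU]

lemma Ld_eq {s : LTS S A} {t : LTS E A} (hI : s.I = t.I) (hU : s.U = t.U) : s.Ld = t.Ld := by
  unfold LTS.Ld; rw [L_eq hI hU]

lemma par_U (s : LTS S A) (e : LTS E A) : (s.par e).U = s.U ∪ e.U := rfl

lemma par_I (s : LTS S A) (e : LTS E A) : (s.par e).I = (s.I \ e.U) ∪ (e.I \ s.U) := rfl

lemma par_L (s : LTS S A) (e : LTS E A) : (s.par e).L = s.L ∪ e.L := by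
  ext a
  simp only [LTS.L, par_I, par_U, Set.mem_union, Set.mem_diff]
  tauto

end Aux
end LTS
namespace LTS
section Aux2
variable {S E SI EI A : Type}

lemma eps_lift_left {s : LTS S A} {e : LTS E A} {p p' : S} (q : E) (h : s.eps p p') :
    (s.par e).eps (p, q) (p', q) :=
  Relation.ReflTransGen.lift (r := fun a b => s.T a none b)
    (p := fun a b => (s.par e).T a none b) (fun x => (x, q))
    (fun _ _ hab => Or.inl ⟨hab, rfl, Or.inl rfl, fun _ _ h => nomatch h⟩) _ _ h

lemma eps_lift_right {s : LTS S A} {e : LTS E A} {q q' : E} (p : S) (h : e.eps q q') :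
    (s.par e).eps (p, q) (p, q') :=
  Relation.ReflTransGen.lift (r := fun a b => e.T a none b)
    (p := fun a b => (s.par e).T a none b) (fun x => (p, x))
    (fun _ _ hab => Or.inr (Or.inl ⟨hab, rfl, Or.inl rfl, fun _ _ h => nomatch h⟩)) _ _ h

lemma eps_unzip {s : LTS S A} {e : LTS E A} {P P' : S × E} (h : (s.par e).eps P P') :
    s.eps P.1 P'.1 ∧ e.eps P.2 P'.2 := by
  induction h with
  | refl => exact ⟨Relation.ReflTransGen.refl, Relation.ReflTransGen.refl⟩
  | tail hstep hT ih =>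
    rcases hT with ⟨h1, h2, _, _⟩ | ⟨h1, h2, _, _⟩ | ⟨a, _, hne, _⟩
    · exact ⟨ih.1.tail h1, h2 ▸ ih.2⟩
    · exact ⟨h2 ▸ ih.1, ih.2.tail h1⟩
    · exact nomatch hne

lemma quiescent_zip {s : LTS S A} {e : LTS E A} {p : S} {q : E}
    (hp : s.quiescent p) (hq : e.quiescent q) : (s.par e).quiescent (p, q) := by
  constructor
  · rintro x hx P' hT
    rcases hT with ⟨h1, _, hL, hnot⟩ | ⟨h1, _, hL, hnot⟩ | ⟨a, ⟨ha1, ha2⟩, heq, hTs, hTe⟩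
    · -- s alone; x ∉ e.L so x ∈ s.U
      have hxe : x ∉ e.L := fun hm => hnot x hm rfl
      have hxs : x ∈ s.U := by
        rcases hx with hx | hx
        · exact hx
        · exact absurd (Or.inr hx : x ∈ e.L) hxe
      exact hp.1 x hxs P'.1 h1
    · have hxs : x ∉ s.L := fun hm => hnot x hm rfl
      have hxe : x ∈ e.U := by
        rcases hx with hx | hx
        · exact absurd (Or.inr hx : x ∈ s.L) hxs
        · exact hx
      exact hq.1 x hxe P'.2 h1
    · cases heq
      rcases hx with hx | hx
      · exact hp.1 x hx P'.1 hTs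
      · exact hq.1 x hx P'.2 hTe
  · rintro P' hT
    rcases hT with ⟨h1, _, _, _⟩ | ⟨h1, _, _, _⟩ | ⟨a, _, hne, _⟩
    · exact hp.2 P'.1 h1
    · exact hq.2 P'.2 h1
    · exact nomatch hne

lemma par_T_swap {s : LTS S A} {e : LTS E A} {P P' : E × S} {ℓ : Option A}
    (h : (e.par s).T P ℓ P') : (s.par e).T (P.2, P.1) ℓ (P'.2, P'.1) := by
  rcases h with ⟨h1, h2, h3, h4⟩ | ⟨h1, h2, h3, h4⟩ | ⟨a, ⟨ha1, ha2⟩, heq, hT1, hT2⟩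
  · exact Or.inr (Or.inl ⟨h1, h2, h3, h4⟩)
  · exact Or.inl ⟨h1, h2, h3, h4⟩
  · exact Or.inr (Or.inr ⟨a, ⟨ha2, ha1⟩, heq, hT2, hT1⟩)

lemma quiescent_swap {s : LTS S A} {e : LTS E A} {P : E × S}
    (h : (e.par s).quiescent P) : (s.par e).quiescent (P.2, P.1) := by
  constructor
  · rintro x hx P' hT
    exact h.1 x (Or.symm hx) (P'.2, P'.1) (par_T_swap hT)
  · rintro P' hT
    exact h.2 (P'.2, P'.1) (par_T_swap hT)

lemma eps_swap {s : LTS S A} {e : LTS E A} {P P' : E × S} (h : (e.par s).eps P P') :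
    (s.par e).eps (P.2, P.1) (P'.2, P'.1) := by
  induction h with
  | refl => exact Relation.ReflTransGen.refl
  | tail _ hT ih => exact ih.tail (par_T_swap hT)

lemma wtrans_swap {s : LTS S A} {e : LTS E A} {σ : List (DLabel A)} :
    ∀ {P P' : E × S}, (e.par s).wtrans P σ P' → (s.par e).wtrans (P.2, P.1) σ (P'.2, P'.1) := by
  induction σ with
  | nil => intro P P' h; exact eps_swap h
  | cons ℓ σ ih =>
    rintro P P' ⟨m1, m2, he, hd, hw⟩
    refine ⟨(m1.2, m1.1), (m2.2, m2.1), eps_swap he, ?_, ih hw⟩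
    cases ℓ with
    | act a => exact par_T_swap hd
    | δ =>
      obtain ⟨heq, hq⟩ := hd
      exact ⟨by rw [heq], quiescent_swap hq⟩

lemma par_I_comm (s : LTS S A) (e : LTS E A) : (e.par s).I = (s.par e).I :=
  Set.union_comm _ _

lemma par_U_comm (s : LTS S A) (e : LTS E A) : (e.par s).U = (s.par e).U :=
  Set.union_comm _ _

lemma par_L_comm (s : LTS S A) (e : LTS E A) : (e.par s).L = (s.par e).L := by
  unfold LTS.L; rw [par_I_comm, par_U_comm]

lemma par_Ld_comm (s : LTS S A) (e : LTS E A) : (e.par s).Ld = (s.par e).Ld := by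
  unfold LTS.Ld; rw [par_L_comm]

lemma Utraces_swap_sub (s : LTS S A) (e : LTS E A) :
    (e.par s).Utraces ⊆ (s.par e).Utraces := by
  rintro σ ⟨hl, ⟨P, hP⟩, href⟩
  refine ⟨by rw [← par_Ld_comm]; exact hl, ⟨(P.2, P.1), wtrans_swap hP⟩, ?_⟩
  intro σ1 a σ2 hdec haI P1 hrun
  obtain ⟨p1, q1⟩ := P1
  have hrun' : (e.par s).wtrans (e.par s).q0 σ1 (q1, p1) := wtrans_swap hrun
  obtain ⟨P', hP'⟩ := href σ1 a σ2 hdec (by rw [par_I_comm]; exact haI) (q1, p1) hrun'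
  exact ⟨(P'.2, P'.1), wtrans_swap hP'⟩

lemma Utraces_swap (s : LTS S A) (e : LTS E A) : (e.par s).Utraces = (s.par e).Utraces :=
  Set.Subset.antisymm (Utraces_swap_sub s e) (Utraces_swap_sub e s)

lemma mem_outSet_after {s : LTS S A} {σ : List (DLabel A)} {x : DLabel A} :
    x ∈ s.outSet (s.after σ) ↔ ∃ p, s.wtrans s.q0 σ p ∧ x ∈ s.out p := by
  simp [LTS.outSet, LTS.after, LTS.out]

lemma out_swap {s : LTS S A} {e : LTS E A} {P : E × S} {x : DLabel A}
    (h : x ∈ (e.par s).out P) : x ∈ (s.par e).out (P.2, P.1) := by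
  cases x with
  | act a =>
    obtain ⟨ha, P', hT⟩ := h
    exact ⟨Or.symm ha, (P'.2, P'.1), par_T_swap hT⟩
  | δ => exact quiescent_swap h

lemma outSet_after_swap (s : LTS S A) (e : LTS E A) (σ : List (DLabel A)) :
    (e.par s).outSet ((e.par s).after σ) = (s.par e).outSet ((s.par e).after σ) := by
  ext x
  rw [mem_outSet_after, mem_outSet_after]
  constructor
  · rintro ⟨P, hP, hout⟩
    exact ⟨(P.2, P.1), wtrans_swap hP, out_swap hout⟩
  · rintro ⟨P, hP, hout⟩
    exact ⟨(P.2, P.1), wtrans_swap hP, out_swap hout⟩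

end Aux2
end LTS
namespace LTS
section Aux3
variable {S E SI EI A : Type}

lemma zip {s : LTS S A} {e : LTS E A} {σ : List (DLabel A)} :
    ∀ {p : S} {q : E} {p' : S} {q' : E}, (∀ ℓ ∈ σ, ℓ ∈ (s.par e).Ld) →
    s.wtrans p (proj σ s.Ld) p' → e.wtrans q (proj σ e.Ld) q' →
    (s.par e).wtrans (p, q) σ (p', q') := by
  induction σ with
  | nil =>
    intro p q p' q' _ hs he
    exact eps_trans' (eps_lift_left q hs) (eps_lift_right p' he)
  | cons ℓ σ ih =>
    intro p q p' q' hlab hs he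
    have hlab' : ∀ ℓ' ∈ σ, ℓ' ∈ (s.par e).Ld := fun ℓ' h => hlab ℓ' (List.mem_cons_of_mem _ h)
    cases ℓ with
    | δ =>
      rw [proj_cons_mem σ delta_mem_Ld] at hs he
      obtain ⟨p1, p2, hse, hsd, hsw⟩ := hs
      obtain ⟨q1, q2, hee, hed, hew⟩ := he
      obtain ⟨rfl, hpq⟩ := hsd
      obtain ⟨rfl, hqq⟩ := hed
      exact ⟨(p1, q1), (p1, q1),
        eps_trans' (eps_lift_left q hse) (eps_lift_right p1 hee),
        ⟨rfl, quiescent_zip hpq hqq⟩, ih hlab' hsw hew⟩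
    | act a =>
      have ha : a ∈ (s.par e).L := act_mem_Ld.mp (hlab _ (List.mem_cons_self))
      rw [par_L] at ha
      by_cases has : a ∈ s.L <;> by_cases hae : a ∈ e.L
      · -- synced
        rw [proj_cons_mem σ (act_mem_Ld.mpr has)] at hs
        rw [proj_cons_mem σ (act_mem_Ld.mpr hae)] at he
        obtain ⟨p1, p2, hse, hsd, hsw⟩ := hs
        obtain ⟨q1, q2, hee, hed, hew⟩ := he
        exact ⟨(p1, q1), (p2, q2),
          eps_trans' (eps_lift_left q hse) (eps_lift_right p1 hee),
          Or.inr (Or.inr ⟨a, ⟨has, hae⟩, rfl, hsd, hed⟩), ih hlab' hsw hew⟩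
      · -- s alone
        rw [proj_cons_mem σ (act_mem_Ld.mpr has)] at hs
        rw [proj_cons_not_mem σ (fun h => hae (act_mem_Ld.mp h))] at he
        obtain ⟨p1, p2, hse, hsd, hsw⟩ := hs
        exact ⟨(p1, q), (p2, q), eps_lift_left q hse,
          Or.inl ⟨hsd, rfl, Or.inr ⟨a, has, rfl⟩,
            fun b hb hbeq => hae (by cases hbeq; exact hb)⟩,
          ih hlab' hsw he⟩
      · -- e alone
        rw [proj_cons_not_mem σ (fun h => has (act_mem_Ld.mp h))] at hs
        rw [proj_cons_mem σ (act_mem_Ld.mpr hae)] at he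
        obtain ⟨q1, q2, hee, hed, hew⟩ := he
        exact ⟨(p, q1), (p, q2), eps_lift_right p hee,
          Or.inr (Or.inl ⟨hed, rfl, Or.inr ⟨a, hae, rfl⟩,
            fun b hb hbeq => has (by cases hbeq; exact hb)⟩),
          ih hlab' hs hew⟩
      · rcases ha with h | h
        · exact absurd h has
        · exact absurd h hae

lemma unzip {s : LTS S A} {e : LTS E A} {σ : List (DLabel A)} :
    ∀ {P P' : S × E}, (s.par e).wtrans P σ P' →
    (∀ σ1 σ2 r, σ = σ1 ++ DLabel.δ :: σ2 → (s.par e).wtrans P σ1 r → (s.par e).quiescent r →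
      s.quiescent r.1 ∧ e.quiescent r.2) →
    s.wtrans P.1 (proj σ s.Ld) P'.1 ∧ e.wtrans P.2 (proj σ e.Ld) P'.2 := by
  induction σ with
  | nil => intro P P' h _; exact eps_unzip h
  | cons ℓ σ ih =>
    rintro P P' ⟨m1, m2, he, hd, hw⟩ HQ
    cases ℓ with
    | δ =>
      obtain ⟨heq, hq⟩ := hd
      subst heq
      have hcomp := HQ [] σ m1 rfl he hq
      have HQ' : ∀ σ1 σ2 r, σ = σ1 ++ DLabel.δ :: σ2 → (s.par e).wtrans m1 σ1 r →
          (s.par e).quiescent r → s.quiescent r.1 ∧ e.quiescent r.2 :=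
        fun σ1 σ2 r hdec hrun hqr =>
          HQ (DLabel.δ :: σ1) σ2 r (by rw [hdec]; rfl) ⟨m1, m1, he, ⟨rfl, hq⟩, hrun⟩ hqr
      obtain ⟨ihs, ihe⟩ := ih hw HQ'
      constructor
      · rw [proj_cons_mem σ delta_mem_Ld]
        exact ⟨m1.1, m1.1, (eps_unzip he).1, ⟨rfl, hcomp.1⟩, ihs⟩
      · rw [proj_cons_mem σ delta_mem_Ld]
        exact ⟨m1.2, m1.2, (eps_unzip he).2, ⟨rfl, hcomp.2⟩, ihe⟩
    | act a =>
      have HQ' : ∀ σ1 σ2 r, σ = σ1 ++ DLabel.δ :: σ2 → (s.par e).wtrans m2 σ1 r →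
          (s.par e).quiescent r → s.quiescent r.1 ∧ e.quiescent r.2 :=
        fun σ1 σ2 r hdec hrun hqr =>
          HQ (DLabel.act a :: σ1) σ2 r (by rw [hdec]; rfl) ⟨m1, m2, he, hd, hrun⟩ hqr
      obtain ⟨ihs, ihe⟩ := ih hw HQ'
      rcases hd with ⟨hT, hm2, hL, hnot⟩ | ⟨hT, hm2, hL, hnot⟩ | ⟨b, ⟨hbs, hbe⟩, heq, hTs, hTe⟩
      · have has : a ∈ s.L := by
          rcases hL with h | ⟨b, hb, h⟩
          · exact nomatch h
          · cases h; exact hb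
        have hae : a ∉ e.L := fun h => hnot a h rfl
        constructor
        · rw [proj_cons_mem σ (act_mem_Ld.mpr has)]
          exact ⟨m1.1, m2.1, (eps_unzip he).1, hT, ihs⟩
        · rw [proj_cons_not_mem σ (fun h => hae (act_mem_Ld.mp h))]
          exact wtrans_eps_left (eps_unzip he).2 (hm2 ▸ ihe)
      · have hae : a ∈ e.L := by
          rcases hL with h | ⟨b, hb, h⟩
          · exact nomatch h
          · cases h; exact hb
        have has : a ∉ s.L := fun h => hnot a h rfl
        constructor
        · rw [proj_cons_not_mem σ (fun h => has (act_mem_Ld.mp h))]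
          exact wtrans_eps_left (eps_unzip he).1 (hm2 ▸ ihs)
        · rw [proj_cons_mem σ (act_mem_Ld.mpr hae)]
          exact ⟨m1.2, m2.2, (eps_unzip he).2, hT, ihe⟩
      · cases heq
        constructor
        · rw [proj_cons_mem σ (act_mem_Ld.mpr hbs)]
          exact ⟨m1.1, m2.1, (eps_unzip he).1, hTs, ihs⟩
        · rw [proj_cons_mem σ (act_mem_Ld.mpr hbe)]
          exact ⟨m1.2, m2.2, (eps_unzip he).2, hTe, ihe⟩

lemma Utraces_prefix {s : LTS S A} {σ1 σ2 : List (DLabel A)}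
    (h : σ1 ++ σ2 ∈ s.Utraces) : σ1 ∈ s.Utraces := by
  obtain ⟨hl, ⟨P, hP⟩, href⟩ := h
  refine ⟨fun ℓ hℓ => hl ℓ (List.mem_append_left _ hℓ), ?_, ?_⟩
  · obtain ⟨m, h1, _⟩ := wtrans_append_decomp hP
    exact ⟨m, h1⟩
  · intro τ1 a τ2 hdec haI P1 hrun
    exact href τ1 a (τ2 ++ σ2) (by rw [hdec]; simp) haI P1 hrun

end Aux3
end LTS
namespace LTS
section Aux4
variable {S E SI EI A : Type}

lemma accepts_swap {s : LTS S A} {e : LTS E A} (h : e.Accepts s) :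
    ∀ σ ∈ (s.par e).Utraces, ∀ (p : S) (q : E),
      (s.par e).wtrans (s.par e).q0 σ (p, q) → ∀ a, DLabel.act a ∈ s.out p → a ∈ e.I →
      a ∈ e.inp q ∧ a ∈ s.U := by
  intro σ hσ p q hrun a ha haI
  exact h σ ((Utraces_swap s e).symm ▸ hσ) q p (wtrans_swap hrun) a ha haI

lemma hq_impl {iS : LTS SI A} {iE : LTS EI A} (hc' : Disjoint iS.U iE.U)
    (his : iS.IOTS) (hie : iE.IOTS) :
    ∀ r : SI × EI, (iS.par iE).quiescent r → iS.quiescent r.1 ∧ iE.quiescent r.2 := by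
  intro r hq
  constructor
  · constructor
    · intro x hx p' hT
      by_cases hxe : x ∈ iE.L
      · have hxI : x ∈ iE.I := by
          rcases hxe with h | h
          · exact h
          · exact absurd hx (Set.disjoint_right.mp hc' h)
        obtain ⟨q', m1, m2, heps, hTe, _⟩ := hie r.2 x hxI
        rcases Relation.ReflTransGen.cases_head heps with heq | ⟨c, hτ, _⟩
        · subst heq
          exact hq.1 x (Or.inl hx) (p', m2)
            (Or.inr (Or.inr ⟨x, ⟨Or.inr hx, hxe⟩, rfl, hT, hTe⟩))
        · exact hq.2 (r.1, c) (Or.inr (Or.inl ⟨hτ, rfl, Or.inl rfl,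
            fun _ _ h => nomatch h⟩))
      · exact hq.1 x (Or.inl hx) (p', r.2)
          (Or.inl ⟨hT, rfl, Or.inr ⟨x, Or.inr hx, rfl⟩,
            fun b hb hbeq => hxe (by cases hbeq; exact hb)⟩)
    · intro p' hT
      exact hq.2 (p', r.2) (Or.inl ⟨hT, rfl, Or.inl rfl, fun _ _ h => nomatch h⟩)
  · constructor
    · intro x hx q' hT
      by_cases hxs : x ∈ iS.L
      · have hxI : x ∈ iS.I := by
          rcases hxs with h | h
          · exact h
          · exact absurd h (Set.disjoint_right.mp hc' hx)
        obtain ⟨p', m1, m2, heps, hTs, _⟩ := his r.1 x hxI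
        rcases Relation.ReflTransGen.cases_head heps with heq | ⟨c, hτ, _⟩
        · subst heq
          exact hq.1 x (Or.inr hx) (m2, q')
            (Or.inr (Or.inr ⟨x, ⟨hxs, Or.inr hx⟩, rfl, hTs, hT⟩))
        · exact hq.2 (c, r.2) (Or.inl ⟨hτ, rfl, Or.inl rfl,
            fun _ _ h => nomatch h⟩)
      · exact hq.1 x (Or.inr hx) (r.1, q')
          (Or.inr (Or.inl ⟨hT, rfl, Or.inr ⟨x, Or.inr hx, rfl⟩,
            fun b hb hbeq => hxs (by cases hbeq; exact hb)⟩))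
    · intro q' hT
      exact hq.2 (r.1, q') (Or.inr (Or.inl ⟨hT, rfl, Or.inl rfl,
        fun _ _ h => nomatch h⟩))

lemma hq_spec {s : LTS S A} {e : LTS E A} (hc : LTS.Composable s e)
    (hma : s.MutuallyAccepts e) {σ σ1 σ2 : List (DLabel A)} {r : S × E}
    (hσ : σ ∈ (s.par e).Utraces) (hdec : σ = σ1 ++ DLabel.δ :: σ2)
    (hrun : (s.par e).wtrans (s.par e).q0 σ1 r) (hqr : (s.par e).quiescent r) :
    s.quiescent r.1 ∧ e.quiescent r.2 := by
  have hσ1 : σ1 ∈ (s.par e).Utraces := Utraces_prefix (hdec ▸ hσ)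
  have hrun' : (s.par e).wtrans (s.par e).q0 σ1 (r.1, r.2) := hrun
  constructor
  · constructor
    · intro x hx p' hT
      by_cases hxe : x ∈ e.L
      · have hxI : x ∈ e.I := by
          rcases hxe with h | h
          · exact h
          · exact absurd h (Set.disjoint_left.mp hc hx)
        obtain ⟨⟨_, q', m1, m2, heps, hTe, _⟩, _⟩ :=
          accepts_swap hma.2 σ1 hσ1 r.1 r.2 hrun' x ⟨hx, p', hT⟩ hxI
        rcases Relation.ReflTransGen.cases_head heps with heq | ⟨c, hτ, _⟩
        · subst heq
          exact hqr.1 x (Or.inl hx) (p', m2)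
            (Or.inr (Or.inr ⟨x, ⟨Or.inr hx, hxe⟩, rfl, hT, hTe⟩))
        · exact hqr.2 (r.1, c) (Or.inr (Or.inl ⟨hτ, rfl, Or.inl rfl,
            fun _ _ h => nomatch h⟩))
      · exact hqr.1 x (Or.inl hx) (p', r.2)
          (Or.inl ⟨hT, rfl, Or.inr ⟨x, Or.inr hx, rfl⟩,
            fun b hb hbeq => hxe (by cases hbeq; exact hb)⟩)
    · intro p' hT
      exact hqr.2 (p', r.2) (Or.inl ⟨hT, rfl, Or.inl rfl, fun _ _ h => nomatch h⟩)
  · constructor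
    · intro x hx q' hT
      by_cases hxs : x ∈ s.L
      · have hxI : x ∈ s.I := by
          rcases hxs with h | h
          · exact h
          · exact absurd hx (Set.disjoint_left.mp hc h)
        obtain ⟨⟨_, p', m1, m2, heps, hTs, _⟩, _⟩ :=
          hma.1 σ1 hσ1 r.1 r.2 hrun' x ⟨hx, q', hT⟩ hxI
        rcases Relation.ReflTransGen.cases_head heps with heq | ⟨c, hτ, _⟩
        · subst heq
          exact hqr.1 x (Or.inr hx) (m2, q')
            (Or.inr (Or.inr ⟨x, ⟨hxs, Or.inr hx⟩, rfl, hTs, hT⟩))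
        · exact hqr.2 (c, r.2) (Or.inl ⟨hτ, rfl, Or.inl rfl,
            fun _ _ h => nomatch h⟩)
      · exact hqr.1 x (Or.inr hx) (r.1, q')
          (Or.inr (Or.inl ⟨hT, rfl, Or.inr ⟨x, Or.inr hx, rfl⟩,
            fun b hb hbeq => hxs (by cases hbeq; exact hb)⟩))
    · intro q' hT
      exact hqr.2 (r.1, q') (Or.inr (Or.inl ⟨hT, rfl, Or.inl rfl,
        fun _ _ h => nomatch h⟩))

end Aux4
end LTS
namespace LTS
section Aux5
variable {S E SI EI A : Type}

lemma proj_Utraces {s : LTS S A} {e : LTS E A} (hc : LTS.Composable s e)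
    (hma : s.MutuallyAccepts e) {σ : List (DLabel A)} (hσ : σ ∈ (s.par e).Utraces) :
    proj σ s.Ld ∈ s.Utraces := by
  obtain ⟨hlab, ⟨R, hR⟩, href⟩ := hσ
  refine ⟨fun ℓ hℓ => (mem_of_mem_proj hℓ).2, ?_, ?_⟩
  · exact ⟨R.1, (unzip hR (fun σ1 σ2 r h1 h2 h3 =>
      hq_spec hc hma ⟨hlab, ⟨R, hR⟩, href⟩ h1 h2 h3)).1⟩
  · intro σ1 a σ2 hdec haI p1 hrun1
    obtain ⟨τ1, τ2, hdecσ, hproj1, hproj2⟩ := proj_decomp hdec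
    subst hdecσ
    obtain ⟨M, hM1, hM2⟩ := wtrans_append_decomp hR
    obtain ⟨M1, M2, heps, hstep, htail⟩ := hM2
    -- e-run up to M1.2
    have HQ1 : ∀ ρ1 ρ2 r, τ1 = ρ1 ++ DLabel.δ :: ρ2 →
        (s.par e).wtrans (s.par e).q0 ρ1 r → (s.par e).quiescent r →
        s.quiescent r.1 ∧ e.quiescent r.2 := by
      intro ρ1 ρ2 r h1 h2 h3
      exact hq_spec hc hma (σ2 := ρ2 ++ DLabel.act a :: τ2) ⟨hlab, ⟨R, hR⟩, href⟩
        (by rw [h1]; simp) h2 h3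
    have herun : e.wtrans e.q0 (proj τ1 e.Ld) M1.2 :=
      wtrans_eps_right (unzip hM1 HQ1).2 (eps_unzip heps).2
    -- zip with p1
    have hzip : (s.par e).wtrans (s.par e).q0 τ1 (p1, M1.2) := by
      refine zip (fun ℓ hℓ => hlab ℓ (List.mem_append_left _ hℓ)) ?_ herun
      rw [hproj1]; exact hrun1
    have hτ1U : τ1 ∈ (s.par e).Utraces :=
      Utraces_prefix (σ2 := DLabel.act a :: τ2) ⟨hlab, ⟨R, hR⟩, href⟩
    by_cases haU : a ∈ e.U
    · -- a is an output of e: use s.Accepts e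
      have hTe : e.T M1.2 (some a) M2.2 := by
        rcases hstep with ⟨_, _, _, hnot⟩ | ⟨hT, _, _, _⟩ | ⟨b, _, heq, _, hTe⟩
        · exact absurd rfl (hnot a (Or.inr haU))
        · exact hT
        · cases heq; exact hTe
      obtain ⟨⟨_, p', hw⟩, _⟩ := hma.1 τ1 hτ1U p1 M1.2 hzip a ⟨haU, M2.2, hTe⟩ haI
      exact ⟨p', hw⟩
    · -- a is an input of the composition
      have haPI : a ∈ (s.par e).I := Or.inl ⟨haI, haU⟩
      obtain ⟨P', hP'⟩ := href τ1 a τ2 rfl haPI (p1, M1.2) hzip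
      obtain ⟨N1, N2, hepsN, hstepN, _⟩ := hP'
      have hepsS : s.eps p1 N1.1 := (eps_unzip hepsN).1
      have hTs : s.T N1.1 (some a) N2.1 := by
        rcases hstepN with ⟨hT, _, _, _⟩ | ⟨_, _, _, hnot⟩ | ⟨b, _, heq, hTs, _⟩
        · exact hT
        · exact absurd rfl (hnot a (Or.inl haI))
        · cases heq; exact hTs
      exact ⟨N2.1, N1.1, N2.1, hepsS, hTs, Relation.ReflTransGen.refl⟩

end Aux5
end LTS

namespace LTS
section Aux6
variable {S E SI EI A : Type}

lemma main_act {s : LTS S A} {e : LTS E A} {iS : LTS SI A} {iE : LTS EI A}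
    (hc : LTS.Composable s e) (his : iS.IOTS) (hie : iE.IOTS)
    (hIs : iS.I = s.I) (hUs : iS.U = s.U) (hIe : iE.I = e.I) (hUe : iE.U = e.U)
    (hma : s.MutuallyAccepts e) (h1 : iS.uioco s)
    {σ : List (DLabel A)} {p p2 : SI} {q : EI} {a : A}
    (hσ : σ ∈ (s.par e).Utraces)
    (hrun : (iS.par iE).wtrans (iS.par iE).q0 σ (p, q))
    (haU : a ∈ s.U) (hT : iS.T p (some a) p2) :
    DLabel.act a ∈ (s.par e).outSet ((s.par e).after σ) := by
  obtain ⟨hlab, ⟨R, hR⟩, href⟩ := hσ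
  have hσ' : σ ∈ (s.par e).Utraces := ⟨hlab, ⟨R, hR⟩, href⟩
  have hcI : Disjoint iS.U iE.U := by rw [hUs, hUe]; exact hc
  have himpl := unzip hrun (fun _ _ r _ _ h3 => hq_impl hcI his hie r h3)
  have hsrun : iS.wtrans iS.q0 (proj σ s.Ld) p := by
    rw [← Ld_eq hIs hUs]; exact himpl.1
  have hσs : proj σ s.Ld ∈ s.Utraces := proj_Utraces hc hma hσ'
  have hout : DLabel.act a ∈ s.outSet (s.after (proj σ s.Ld)) := by
    apply h1 _ hσs
    exact mem_outSet_after.mpr ⟨p, hsrun, ⟨show a ∈ iS.U by rw [hUs]; exact haU, p2, hT⟩⟩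
  obtain ⟨p'', hp''run, haU', p3, hTs⟩ := mem_outSet_after.mp hout
  have HQs : ∀ σ1 σ2 r, σ = σ1 ++ DLabel.δ :: σ2 →
      (s.par e).wtrans (s.par e).q0 σ1 r → (s.par e).quiescent r →
      s.quiescent r.1 ∧ e.quiescent r.2 :=
    fun σ1 σ2 r h1' h2' h3' => hq_spec hc hma hσ' h1' h2' h3'
  have herun : e.wtrans e.q0 (proj σ e.Ld) R.2 := (unzip hR HQs).2
  by_cases hae : a ∈ e.L
  · have haI : a ∈ e.I := by
      rcases hae with h | h
      · exact h
      · exact absurd h (Set.disjoint_left.mp hc haU)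
    have hzip : (s.par e).wtrans (s.par e).q0 σ (p'', R.2) := zip hlab hp''run herun
    obtain ⟨⟨_, q', m1, m2, heps, hTe, _⟩, _⟩ :=
      accepts_swap hma.2 σ hσ' p'' R.2 hzip a ⟨haU, p3, hTs⟩ haI
    have herun2 : e.wtrans e.q0 (proj σ e.Ld) m1 := wtrans_eps_right herun heps
    have hzip2 := zip hlab hp''run herun2
    exact mem_outSet_after.mpr ⟨(p'', m1), hzip2, ⟨Or.inl haU, (p3, m2),
      Or.inr (Or.inr ⟨a, ⟨Or.inr haU, hae⟩, rfl, hTs, hTe⟩)⟩⟩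
  · have hzip : (s.par e).wtrans (s.par e).q0 σ (p'', R.2) := zip hlab hp''run herun
    exact mem_outSet_after.mpr ⟨(p'', R.2), hzip, ⟨Or.inl haU, (p3, R.2),
      Or.inl ⟨hTs, rfl, Or.inr ⟨a, Or.inr haU, rfl⟩,
        fun b hb hbeq => hae (by cases hbeq; exact hb)⟩⟩⟩

end Aux6
end LTS


/-- compositionality of uioco: for mutually accepting composable
specifications and uioco-correct input-enabled implementations, the composition
of the implementations is uioco-correct w.r.t. the composed specification. -/
theorem uioco_par_of_mutuallyAccepts {S E SI EI A : Type}
    (s : LTS S A) (e : LTS E A) (iS : LTS SI A) (iE : LTS EI A)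
    (hs : s.WF) (he : e.WF) (hiswf : iS.WF) (hiewf : iE.WF)
    (hc : LTS.Composable s e)
    (his : iS.IOTS) (hie : iE.IOTS)
    (hIs : iS.I = s.I) (hUs : iS.U = s.U) (hIe : iE.I = e.I) (hUe : iE.U = e.U)
    (hma : s.MutuallyAccepts e)
    (h1 : iS.uioco s) (h2 : iE.uioco e) :
    (iS.par iE).uioco (s.par e) := by
  intro σ hσ x hx
  rw [LTS.mem_outSet_after] at hx
  obtain ⟨⟨p, q⟩, hrun, hout⟩ := hx
  have hcI : Disjoint iS.U iE.U := by rw [hUs, hUe]; exact hc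
  have hce : LTS.Composable e s := Disjoint.symm hc
  have hmae : e.MutuallyAccepts s := ⟨hma.2, hma.1⟩
  cases x with
  | δ =>
    have hcq := LTS.hq_impl hcI his hie (p, q) hout
    have himpl := LTS.unzip hrun (fun _ _ r _ _ h3 => LTS.hq_impl hcI his hie r h3)
    have hσs : LTS.proj σ s.Ld ∈ s.Utraces := LTS.proj_Utraces hc hma hσ
    have hσswap : σ ∈ (e.par s).Utraces := by rw [LTS.Utraces_swap]; exact hσ
    have hσe : LTS.proj σ e.Ld ∈ e.Utraces := LTS.proj_Utraces hce hmae hσswap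
    have hds : DLabel.δ ∈ s.outSet (s.after (LTS.proj σ s.Ld)) := by
      apply h1 _ hσs
      exact LTS.mem_outSet_after.mpr ⟨p, by rw [← LTS.Ld_eq hIs hUs]; exact himpl.1, hcq.1⟩
    have hde : DLabel.δ ∈ e.outSet (e.after (LTS.proj σ e.Ld)) := by
      apply h2 _ hσe
      exact LTS.mem_outSet_after.mpr ⟨q, by rw [← LTS.Ld_eq hIe hUe]; exact himpl.2, hcq.2⟩
    obtain ⟨p'', hp'', hqp⟩ := LTS.mem_outSet_after.mp hds
    obtain ⟨q'', hq'', hqq⟩ := LTS.mem_outSet_after.mp hde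
    obtain ⟨hlab, _, _⟩ := hσ
    have hzip := LTS.zip hlab hp'' hq''
    exact LTS.mem_outSet_after.mpr ⟨(p'', q''), hzip, LTS.quiescent_zip hqp hqq⟩
  | act a =>
    obtain ⟨haU, P', hTP⟩ := hout
    rcases haU with haU | haU
    · have hTs : iS.T p (some a) P'.1 := by
        rcases hTP with ⟨hT, _, _, _⟩ | ⟨_, _, _, hnot⟩ | ⟨b, _, heq, hTs, _⟩
        · exact hT
        · exact absurd rfl (hnot a (Or.inr haU))
        · cases heq; exact hTs
      exact LTS.main_act hc his hie hIs hUs hIe hUe hma h1 hσ hrun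
        (show a ∈ s.U by rw [← hUs]; exact haU) hTs
    · have hTe : iE.T q (some a) P'.2 := by
        rcases hTP with ⟨_, _, _, hnot⟩ | ⟨hT, _, _, _⟩ | ⟨b, _, heq, _, hTe⟩
        · exact absurd rfl (hnot a (Or.inr haU))
        · exact hT
        · cases heq; exact hTe
      have hσswap : σ ∈ (e.par s).Utraces := by rw [LTS.Utraces_swap]; exact hσ
      have hrunswap : (iE.par iS).wtrans (iE.par iS).q0 σ (q, p) := LTS.wtrans_swap hrun
      have hres := LTS.main_act hce hie his hIe hUe hIs hUs hmae h2 hσswap hrunswap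
        (show a ∈ e.U by rw [← hUe]; exact haU) hTe
      rw [LTS.outSet_after_swap] at hres
      exact hres
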